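/- If a digraph G has exactly two connected components A and B with A having strictly fewer vertices than B, and A is not switching-stable, then G is reconstructible from its deck. -/

import Mathlib

/-- A digraph on a vertex type `V`: a set of ordered pairs of vertices,
given by its adjacency relation. -/
structure Dgraph (V : Type*) where
  Adj : V → V → Prop

namespace Dgraph

variable {V W : Type*}

/-- Switching at a vertex `v`: every edge incident with `v` is reversed. -/
def switchV (G : Dgraph V) (v : V) : Dgraph V :=
  ⟨fun a b => ((a = v ∨ b = v) ∧ G.Adj b a) ∨ (¬(a = v ∨ b = v) ∧ G.Adj a b)⟩

/-- Switching about a set `S`: every edge with exactly one endpoint in `S` is reversed. -/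
def switchSet (G : Dgraph V) (S : Set V) : Dgraph V :=
  ⟨fun a b => (((a ∈ S) ↔ (b ∈ S)) ∧ G.Adj a b) ∨ (¬((a ∈ S) ↔ (b ∈ S)) ∧ G.Adj b a)⟩

/-- Relabelling of a digraph by a permutation: `(γ a, γ b)` is an edge of `G.relabel γ`
whenever `(a,b)` is an edge of `G`. -/
def relabel (G : Dgraph V) (γ : Equiv.Perm V) : Dgraph V :=
  ⟨fun a b => G.Adj (γ.symm a) (γ.symm b)⟩

/-- Isomorphism of digraphs (possibly on different vertex types). -/
def DIso (G : Dgraph V) (H : Dgraph W) : Prop :=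
  ∃ e : V ≃ W, ∀ a b, G.Adj a b ↔ H.Adj (e a) (e b)

/-- An oriented graph: a digraph with no loops and no pair of opposite edges. -/
def IsOriented (G : Dgraph V) : Prop := ∀ a b, G.Adj a b → ¬ G.Adj b a

/-- The underlying undirected (simple) graph of a digraph. -/
def underlying (G : Dgraph V) : SimpleGraph V where
  Adj a b := a ≠ b ∧ (G.Adj a b ∨ G.Adj b a)
  symm := ⟨fun a b ⟨h1, h2⟩ => ⟨h1.symm, h2.symm⟩⟩
  loopless := ⟨fun a ⟨h1, _⟩ => h1 rfl⟩

/-- The vertex set of the connected component (of the underlying graph) containing `v`. -/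
def compSet (G : Dgraph V) (v : V) : Set V := {x | (underlying G).Reachable v x}

/-- The induced subdigraph on a set of vertices. -/
def induce (G : Dgraph V) (S : Set V) : Dgraph S := ⟨fun a b => G.Adj a b⟩

/-- A digraph is switching-stable if each vertex switching is isomorphic to it. -/
def SwitchStable (G : Dgraph V) : Prop := ∀ v, DIso (G.switchV v) G

/-- Isomorphism as a setoid on digraphs with a fixed vertex type. -/
def isoSetoid (V : Type*) : Setoid (Dgraph V) where
  r := DIso
  iseqv := by
    refine ⟨fun G => ⟨Equiv.refl V, fun a b => Iff.rfl⟩, ?_, ?_⟩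
    · rintro G H ⟨e, h⟩
      exact ⟨e.symm, fun a b => by simpa using (h (e.symm a) (e.symm b)).symm⟩
    · rintro G H K ⟨e, h⟩ ⟨f, h2⟩
      exact ⟨e.trans f, fun a b => (h a b).trans (h2 _ _)⟩

/-- The switching deck: the multiset of isomorphism classes of vertex switchings. -/
def deck (G : Dgraph V) [Fintype V] : Multiset (Quotient (isoSetoid V)) :=
  Finset.univ.val.map fun v => Quotient.mk (isoSetoid V) (G.switchV v)

/-- The `t`-deck: the deck augmented by `t` copies of the isomorphism class of `G`. -/
def tdeck (G : Dgraph V) [Fintype V] (t : ℕ) : Multiset (Quotient (isoSetoid V)) :=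
  Multiset.replicate t (Quotient.mk (isoSetoid V) G) + G.deck

end Dgraph

namespace Dgraph

variable {V W : Type*}

-- ### auxiliary lemmas

lemma adj_ext {G H : Dgraph V} (h : ∀ a b, G.Adj a b ↔ H.Adj a b) : G = H := by
  cases G; cases H
  simp only [mk.injEq]
  funext a b
  exact propext (h a b)

lemma DIso.refl (G : Dgraph V) : DIso G G := ⟨Equiv.refl V, fun _ _ => Iff.rfl⟩

lemma DIso.symm {G : Dgraph V} {H : Dgraph W} : DIso G H → DIso H G := by
  rintro ⟨e, h⟩
  exact ⟨e.symm, fun a b => by simpa using (h (e.symm a) (e.symm b)).symm⟩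

lemma DIso.trans {U' : Type*} {G : Dgraph V} {H : Dgraph W} {K : Dgraph U'} :
    DIso G H → DIso H K → DIso G K := by
  rintro ⟨e, h⟩ ⟨f, h2⟩
  exact ⟨e.trans f, fun a b => (h a b).trans (h2 _ _)⟩

lemma underlying_switchV (G : Dgraph V) (v : V) :
    (G.switchV v).underlying = G.underlying := by
  ext a b
  simp only [underlying, switchV]
  by_cases h : a = v ∨ b = v <;> simp [h] <;> tauto

lemma diso_relabel (G : Dgraph V) (γ : Equiv.Perm V) : DIso G (G.relabel γ) :=
  ⟨γ, fun a b => by simp [relabel]⟩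

lemma switchV_relabel (G : Dgraph V) (γ : Equiv.Perm V) (v : V) :
    (G.relabel γ).switchV v = (G.switchV (γ.symm v)).relabel γ := by
  apply adj_ext
  intro a b
  have hc : (a = v ∨ b = v) ↔ (γ.symm a = γ.symm v ∨ γ.symm b = γ.symm v) := by simp
  simp only [switchV, relabel, hc]

lemma deck_relabel (G : Dgraph V) [Fintype V] (γ : Equiv.Perm V) :
    (G.relabel γ).deck = G.deck := by
  unfold deck
  have h1 : ∀ v : V, Quotient.mk (isoSetoid V) ((G.relabel γ).switchV v)
      = Quotient.mk (isoSetoid V) (G.switchV (γ.symm v)) := by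
    intro v
    rw [switchV_relabel]
    exact Quot.sound (DIso.symm (diso_relabel _ γ))
  simp only [h1]
  have : (Finset.univ.val.map fun v : V => γ.symm v) = Finset.univ.val := by
    have := Finset.map_univ_equiv γ.symm
    calc (Finset.univ.val.map fun v : V => γ.symm v)
        = (Finset.univ.map γ.symm.toEmbedding).val := by rw [Finset.map_val]; rfl
      _ = Finset.univ.val := by rw [this]
  calc Finset.univ.val.map (fun v => Quotient.mk (isoSetoid V) (G.switchV (γ.symm v)))
      = (Finset.univ.val.map fun v : V => γ.symm v).map
          (fun v => Quotient.mk (isoSetoid V) (G.switchV v)) := by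
        rw [Multiset.map_map]; rfl
    _ = _ := by rw [this]


section Parts

variable {V : Type*} {U : SimpleGraph V} {u w : V}

lemma mem_small_or_big (hcover : ∀ x, U.Reachable u x ∨ U.Reachable w x) (x : V) :
    x ∈ {x | U.Reachable u x} ∨ x ∈ {x | U.Reachable w x} := hcover x

lemma not_mem_both (hdiff : ¬ U.Reachable u w) {x : V}
    (hS : x ∈ {x | U.Reachable u x}) (hT : x ∈ {x | U.Reachable w x}) : False :=
  hdiff (hS.trans hT.symm)

lemma small_closed {x y : V} (hS : x ∈ {x | U.Reachable u x}) (h : U.Reachable x y) :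
    y ∈ {x | U.Reachable u x} := Set.mem_setOf.2 ((Set.mem_setOf.1 hS).trans h)

lemma big_closed {x y : V} (hT : x ∈ {x | U.Reachable w x}) (h : U.Reachable x y) :
    y ∈ {x | U.Reachable w x} := Set.mem_setOf.2 ((Set.mem_setOf.1 hT).trans h)

/-- no cross edges in a digraph whose underlying graph is `U` -/
lemma no_cross (hdiff : ¬ U.Reachable u w) {X : Dgraph V} (hX : X.underlying = U)
    {x y : V} (hS : x ∈ {x | U.Reachable u x}) (hT : y ∈ {x | U.Reachable w x}) :
    ¬ X.Adj x y ∧ ¬ X.Adj y x := by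
  have hne : x ≠ y := by
    rintro rfl
    exact not_mem_both hdiff hS hT
  constructor <;> intro h
  · have : U.Adj x y := hX ▸ (⟨hne, Or.inl h⟩ : X.underlying.Adj x y)
    exact not_mem_both hdiff (small_closed hS this.reachable) hT
  · have : U.Adj x y := hX ▸ (⟨hne, Or.inr h⟩ : X.underlying.Adj x y)
    exact not_mem_both hdiff (small_closed hS this.reachable) hT

lemma reach_map {X Y : Dgraph V} (hX : X.underlying = U) (hY : Y.underlying = U)
    (e : V ≃ V) (he : ∀ a b, X.Adj a b ↔ Y.Adj (e a) (e b)) {x y : V}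
    (h : U.Reachable x y) : U.Reachable (e x) (e y) := by
  have hhom : ∀ a b : V, U.Adj a b → U.Adj (e a) (e b) := by
    intro a b hab
    rw [← hX] at hab
    rw [← hY]
    obtain ⟨hne, h2⟩ := hab
    refine ⟨fun hc => hne (e.injective hc), ?_⟩
    rcases h2 with h2 | h2
    · exact Or.inl ((he a b).1 h2)
    · exact Or.inr ((he b a).1 h2)
  exact SimpleGraph.Reachable.map (⟨e, fun h' => hhom _ _ h'⟩ : U →g U) h

lemma parts_diso [Fintype V]
    (hdiff : ¬ U.Reachable u w)
    (hcover : ∀ x, U.Reachable u x ∨ U.Reachable w x)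
    (hsize : Nat.card {x | U.Reachable u x} < Nat.card {x | U.Reachable w x})
    {X Y : Dgraph V} (hX : X.underlying = U) (hY : Y.underlying = U)
    (h : DIso X Y) :
    DIso (X.induce {x | U.Reachable u x}) (Y.induce {x | U.Reachable u x}) ∧
      DIso (X.induce {x | U.Reachable w x}) (Y.induce {x | U.Reachable w x}) := by
  obtain ⟨e, he⟩ := h
  set S : Set V := {x | U.Reachable u x} with hSdef
  set T : Set V := {x | U.Reachable w x} with hTdef
  have hrm : ∀ {x y : V}, U.Reachable x y → U.Reachable (e x) (e y) :=
    fun h' => reach_map hX hY e he h'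
  -- locate e u and e w
  have hmapS : e u ∈ S → ∀ x ∈ S, e x ∈ S := by
    intro h1 x hx
    exact small_closed h1 (hrm (Set.mem_setOf.1 hx))
  have hmapS' : e u ∈ T → ∀ x ∈ S, e x ∈ T := by
    intro h1 x hx
    exact big_closed h1 (hrm (Set.mem_setOf.1 hx))
  have hmapT : e w ∈ T → ∀ x ∈ T, e x ∈ T := by
    intro h1 x hx
    exact big_closed h1 (hrm (Set.mem_setOf.1 hx))
  have hmapT' : e w ∈ S → ∀ x ∈ T, e x ∈ S := by
    intro h1 x hx
    exact small_closed h1 (hrm (Set.mem_setOf.1 hx))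
  have hTS : ¬ (e w ∈ S) := by
    intro h1
    -- injection from T into S
    have : Nat.card T ≤ Nat.card S := by
      have : Function.Injective (fun t : T => (⟨e t, hmapT' h1 t t.2⟩ : S)) := by
        intro s t hst
        simp only [Subtype.mk.injEq] at hst
        exact Subtype.ext (e.injective hst)
      exact Nat.card_le_card_of_injective _ this
    omega
  have hew : e w ∈ T := (hcover (e w)).resolve_left hTS
  have heu : e u ∈ S := by
    rcases hcover (e u) with h1 | h1
    · exact h1
    · -- everything maps into T, but u is in S
      exfalso
      have hall : ∀ x : V, e x ∈ T := by
        intro x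
        rcases hcover x with hx | hx
        · exact hmapS' h1 x hx
        · exact hmapT hew x hx
      have : e (e.symm u) ∈ T := hall _
      rw [Equiv.apply_symm_apply] at this
      exact not_mem_both hdiff (Set.mem_setOf.2 (SimpleGraph.Reachable.refl u)) this
  -- now e maps S to S and T to T, bidirectionally
  have hSiff : ∀ x : V, x ∈ S ↔ e x ∈ S := by
    intro x
    constructor
    · exact fun hx => hmapS heu x hx
    · intro hx
      rcases hcover x with h1 | h1
      · exact h1
      · exact absurd hx (fun hc => not_mem_both hdiff hc (hmapT hew x h1))
  have hTiff : ∀ x : V, x ∈ T ↔ e x ∈ T := by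
    intro x
    constructor
    · exact fun hx => hmapT hew x hx
    · intro hx
      rcases hcover x with h1 | h1
      · exact absurd (hmapS heu x h1) (fun hc => not_mem_both hdiff hc hx)
      · exact h1
  constructor
  · exact ⟨e.subtypeEquiv hSiff, fun a b => he a b⟩
  · exact ⟨e.subtypeEquiv hTiff, fun a b => he a b⟩

lemma diso_of_parts
    (hdiff : ¬ U.Reachable u w)
    (hcover : ∀ x, U.Reachable u x ∨ U.Reachable w x)
    {X Y : Dgraph V} (hX : X.underlying = U) (hY : Y.underlying = U)
    (hS : DIso (X.induce {x | U.Reachable u x}) (Y.induce {x | U.Reachable u x}))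
    (hT : DIso (X.induce {x | U.Reachable w x}) (Y.induce {x | U.Reachable w x})) :
    DIso X Y := by
  classical
  set S : Set V := {x | U.Reachable u x} with hSdef
  set T : Set V := {x | U.Reachable w x} with hTdef
  obtain ⟨eS, heS⟩ := hS
  obtain ⟨eT, heT⟩ := hT
  -- the equivalence V ≃ S ⊕ T
  let φ : V ≃ (S ⊕ T) :=
    { toFun := fun x => if h : x ∈ S then Sum.inl ⟨x, h⟩
        else Sum.inr ⟨x, (hcover x).resolve_left h⟩
      invFun := Sum.elim (fun s => s.1) (fun t => t.1)
      left_inv := by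
        intro x
        by_cases h : x ∈ S <;> simp [h]
      right_inv := by
        rintro (⟨x, hx⟩ | ⟨x, hx⟩)
        · simp [hx]
        · have : ¬ x ∈ S := fun hc => not_mem_both hdiff hc hx
          simp [this] }
  let e : V ≃ V := φ.trans ((eS.sumCongr eT).trans φ.symm)
  have heval_S : ∀ (x : V) (h : x ∈ S), e x = (eS ⟨x, h⟩ : S) := by
    intro x h
    simp only [e, φ, Equiv.trans_apply, Equiv.coe_fn_mk, dif_pos h, Equiv.sumCongr_apply,
      Sum.map_inl, Equiv.coe_fn_symm_mk, Sum.elim_inl]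
  have heval_T : ∀ (x : V) (h : x ∈ T) (h' : ¬ x ∈ S), e x = (eT ⟨x, h⟩ : T) := by
    intro x h h'
    simp only [e, φ, Equiv.trans_apply, Equiv.coe_fn_mk, dif_neg h', Equiv.sumCongr_apply,
      Sum.map_inr, Equiv.coe_fn_symm_mk, Sum.elim_inr]
  refine ⟨e, fun a b => ?_⟩
  by_cases ha : a ∈ S <;> by_cases hb : b ∈ S
  · rw [heval_S a ha, heval_S b hb]
    exact heS ⟨a, ha⟩ ⟨b, hb⟩
  · have hb' : b ∈ T := (hcover b).resolve_left hb
    rw [heval_S a ha, heval_T b hb' hb]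
    have h1 := (no_cross hdiff hX ha hb').1
    have h2 := (no_cross hdiff hY (eS ⟨a, ha⟩).2 (eT ⟨b, hb'⟩).2).1
    exact iff_of_false h1 h2
  · have ha' : a ∈ T := (hcover a).resolve_left ha
    rw [heval_T a ha' ha, heval_S b hb]
    have h1 := (no_cross hdiff hX hb ha').2
    have h2 := (no_cross hdiff hY (eS ⟨b, hb⟩).2 (eT ⟨a, ha'⟩).2).2
    exact iff_of_false h1 h2
  · have ha' : a ∈ T := (hcover a).resolve_left ha
    have hb' : b ∈ T := (hcover b).resolve_left hb
    rw [heval_T a ha' ha, heval_T b hb' hb]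
    exact heT ⟨a, ha'⟩ ⟨b, hb'⟩

end Parts


lemma induce_switchV_mem {V : Type*} (X : Dgraph V) {S : Set V} {v : V} (hv : v ∈ S) :
    (X.switchV v).induce S = (X.induce S).switchV ⟨v, hv⟩ := by
  apply adj_ext
  intro a b
  have hc : ((a : V) = v ∨ (b : V) = v) ↔ (a = ⟨v, hv⟩ ∨ b = ⟨v, hv⟩) := by
    simp [Subtype.ext_iff]
  simp only [induce, switchV]
  rw [← hc]

lemma induce_switchV_not_mem {V : Type*} (X : Dgraph V) {S : Set V} {v : V} (hv : v ∉ S) :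
    (X.switchV v).induce S = X.induce S := by
  apply adj_ext
  intro a b
  have ha : (a : V) ≠ v := fun h => hv (h ▸ a.2)
  have hb : (b : V) ≠ v := fun h => hv (h ▸ b.2)
  simp [induce, switchV, ha, hb]

lemma underlying_adj_of_diso {V : Type*} {X Y : Dgraph V} (e : V ≃ V)
    (he : ∀ a b, X.Adj a b ↔ Y.Adj (e a) (e b)) (a b : V) :
    X.underlying.Adj a b ↔ Y.underlying.Adj (e a) (e b) := by
  simp only [underlying, ne_eq, EmbeddingLike.apply_eq_iff_eq]
  rw [he a b, he b a]

lemma underlying_relabel {V : Type*} (X : Dgraph V) (γ : Equiv.Perm V) (a b : V) :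
    (X.relabel γ).underlying.Adj a b ↔ X.underlying.Adj (γ.symm a) (γ.symm b) := by
  simp only [underlying, relabel, ne_eq, EmbeddingLike.apply_eq_iff_eq]

end Dgraph

open Dgraph in
/-- If a digraph has exactly two components, the smaller of which is not
switching-stable, then it is reconstructible from its deck. -/
theorem reconstructible_two_components {V : Type*} [Fintype V] (G : Dgraph V)
    (u w : V) (hdiff : ¬ G.underlying.Reachable u w)
    (hcover : ∀ x : V, G.underlying.Reachable u x ∨ G.underlying.Reachable w x)
    (hsize : Nat.card (G.compSet u) < Nat.card (G.compSet w))
    (hA : ¬ SwitchStable (G.induce (G.compSet u))) :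
    ∀ H : Dgraph V, H.deck = G.deck → DIso H G := by
  classical
  intro H hdeck
  set U : SimpleGraph V := G.underlying with hUdef
  set S : Set V := {x | U.Reachable u x} with hSdef
  set T : Set V := {x | U.Reachable w x} with hTdef
  -- Step 0: relabel H so that its underlying graph is exactly U
  have hmem : Quotient.mk (isoSetoid V) (H.switchV u) ∈ H.deck :=
    Multiset.mem_map_of_mem _ (Finset.mem_univ u)
  rw [hdeck] at hmem
  obtain ⟨v', _, heq⟩ := Multiset.mem_map.1 hmem
  have hiso0 : DIso (H.switchV u) (G.switchV v') := Quotient.exact heq.symm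
  obtain ⟨e0, he0⟩ := hiso0
  set K : Dgraph V := H.relabel e0 with hKdef
  have hKU : K.underlying = U := by
    ext a b
    rw [underlying_relabel]
    have h1 : H.underlying = (H.switchV u).underlying := (underlying_switchV H u).symm
    have h2 := underlying_adj_of_diso e0 he0 (e0.symm a) (e0.symm b)
    rw [h1, h2, Equiv.apply_symm_apply, Equiv.apply_symm_apply, underlying_switchV]
  have hdeckK : K.deck = G.deck := by rw [hKdef, deck_relabel, hdeck]
  suffices hKG : DIso K G by exact (diso_relabel H e0).trans hKG
  -- Step 1: the multiset of pairs of part-classes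
  have hGU : G.underlying = U := rfl
  set g : Dgraph V → Quotient (isoSetoid S) × Quotient (isoSetoid T) :=
    fun X => (Quotient.mk (isoSetoid S) (X.induce S), Quotient.mk (isoSetoid T) (X.induce T))
    with hgdef
  set Fk : V → Quotient (isoSetoid S) × Quotient (isoSetoid T) := fun v => g (K.switchV v)
    with hFkdef
  set Fg : V → Quotient (isoSetoid S) × Quotient (isoSetoid T) := fun v => g (G.switchV v)
    with hFgdef
  set m : Multiset (Dgraph V) := Finset.univ.val.map (fun v => K.switchV v) with hmdef
  set n : Multiset (Dgraph V) := Finset.univ.val.map (fun v => G.switchV v) with hndef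
  have hmU : ∀ X ∈ m, X.underlying = U := by
    intro X hX
    obtain ⟨v, _, rfl⟩ := Multiset.mem_map.1 hX
    rw [underlying_switchV, hKU]
  have hnU : ∀ X ∈ n, X.underlying = U := by
    intro X hX
    obtain ⟨v, _, rfl⟩ := Multiset.mem_map.1 hX
    rw [underlying_switchV]
  have hsize' : Nat.card S < Nat.card T := hsize
  have hrel : Multiset.Rel (fun X Y : Dgraph V => DIso X Y) m n := by
    have hmm : m.map (Quotient.mk (isoSetoid V)) = n.map (Quotient.mk (isoSetoid V)) := by
      rw [hmdef, hndef, Multiset.map_map, Multiset.map_map]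
      exact hdeckK
    have h2 := Multiset.rel_eq.2 hmm
    have h3 := Multiset.rel_map.1 h2
    exact h3.mono (fun a _ b _ hab => Quotient.exact hab)
  have hrelg : Multiset.Rel (fun X Y : Dgraph V => g X = g Y) m n := by
    refine hrel.mono (fun X hX Y hY hXY => ?_)
    obtain ⟨h1, h2⟩ := parts_diso hdiff hcover hsize' (hmU X hX) (hnU Y hY) hXY
    exact Prod.ext (Quot.sound h1) (Quot.sound h2)
  have hPP : m.map g = n.map g := Multiset.rel_eq.1 (Multiset.rel_map.2 hrelg)
  have hPk : Finset.univ.val.map Fk = m.map g := by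
    rw [hmdef, Multiset.map_map]; rfl
  have hPg : Finset.univ.val.map Fg = n.map g := by
    rw [hndef, Multiset.map_map]; rfl
  have hPkg : Finset.univ.val.map Fk = Finset.univ.val.map Fg := by
    rw [hPk, hPg, hPP]
  -- evaluating Fk and Fg
  have hdisj : ∀ {x : V}, x ∈ S → x ∈ T → False := fun hS hT => not_mem_both hdiff hS hT
  have hFk_mem : ∀ (v : V), v ∈ S → (Fk v).2 = Quotient.mk (isoSetoid T) (K.induce T) := by
    intro v hv
    have hv' : v ∉ T := fun hc => hdisj hv hc
    simp only [hFkdef, hgdef, induce_switchV_not_mem K hv']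
  have hFk_not_mem : ∀ (v : V), v ∉ S → (Fk v).1 = Quotient.mk (isoSetoid S) (K.induce S) := by
    intro v hv
    simp only [hFkdef, hgdef, induce_switchV_not_mem K hv]
  have hFg_mem : ∀ (v : V) (hv : v ∈ S),
      Fg v = (Quotient.mk (isoSetoid S) ((G.induce S).switchV ⟨v, hv⟩),
        Quotient.mk (isoSetoid T) (G.induce T)) := by
    intro v hv
    have hv' : v ∉ T := fun hc => hdisj hv hc
    simp only [hFgdef, hgdef, induce_switchV_not_mem G hv', induce_switchV_mem G hv]
  have hFg_not_mem : ∀ (v : V), v ∉ S → (Fg v).1 = Quotient.mk (isoSetoid S) (G.induce S) := by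
    intro v hv
    simp only [hFgdef, hgdef, induce_switchV_not_mem G hv]
  -- cardinalities
  set mS : Multiset V := Multiset.filter (fun v => v ∈ S) Finset.univ.val with hmSdef
  set mT : Multiset V := Multiset.filter (fun v => ¬ v ∈ S) Finset.univ.val with hmTdef
  have hsplit : mS + mT = Finset.univ.val := Multiset.filter_add_not _ _
  have hcardS : Multiset.card mS = Nat.card S := by
    rw [Nat.card_eq_fintype_card, Fintype.card_subtype]
    rfl
  have hcardT : Multiset.card mT = Nat.card T := by
    have he : {x : V // ¬ x ∈ S} ≃ T := by
      refine Equiv.subtypeEquivRight (fun x => ?_)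
      constructor
      · intro hx
        exact (hcover x).resolve_left hx
      · intro hx hc
        exact hdisj hc hx
    rw [← Nat.card_congr he, Nat.card_eq_fintype_card, Fintype.card_subtype]
    rfl
  -- Step 2: the small parts agree
  set αK : Quotient (isoSetoid S) := Quotient.mk (isoSetoid S) (K.induce S) with hαKdef
  set αG : Quotient (isoSetoid S) := Quotient.mk (isoSetoid S) (G.induce S) with hαGdef
  have hstep1 : αK = αG := by
    by_contra hne
    set q : Quotient (isoSetoid S) × Quotient (isoSetoid T) → Prop := fun p => p.1 = αK
      with hqdef
    have hcnt : Multiset.countP q (Finset.univ.val.map Fk)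
        = Multiset.countP q (Finset.univ.val.map Fg) := by rw [hPkg]
    have hlow : Nat.card T ≤ Multiset.countP q (Finset.univ.val.map Fk) := by
      rw [← hsplit, Multiset.map_add, Multiset.countP_add]
      have : Multiset.countP q (mT.map Fk) = Multiset.card (mT.map Fk) := by
        rw [Multiset.countP_eq_card]
        intro p hp
        obtain ⟨v, hv, rfl⟩ := Multiset.mem_map.1 hp
        exact hFk_not_mem v (Multiset.mem_filter.1 hv).2
      rw [this, Multiset.card_map, hcardT]
      omega
    have hhigh : Multiset.countP q (Finset.univ.val.map Fg) ≤ Nat.card S := by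
      rw [← hsplit, Multiset.map_add, Multiset.countP_add]
      have h0 : Multiset.countP q (mT.map Fg) = 0 := by
        rw [Multiset.countP_eq_zero]
        intro p hp
        obtain ⟨v, hv, rfl⟩ := Multiset.mem_map.1 hp
        exact fun hc =>
          hne ((hFg_not_mem v (Multiset.mem_filter.1 hv).2).symm.trans hc).symm
      rw [h0]
      have := Multiset.countP_le_card q (mS.map Fg)
      rw [Multiset.card_map, hcardS] at this
      omega
    omega
  -- Step 3: the big parts agree
  set βK : Quotient (isoSetoid T) := Quotient.mk (isoSetoid T) (K.induce T) with hβKdef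
  set βG : Quotient (isoSetoid T) := Quotient.mk (isoSetoid T) (G.induce T) with hβGdef
  have hstep2 : βK = βG := by
    obtain ⟨v0, hv0⟩ := not_forall.1 hA
    have hq0 : Fg ↑v0 ∈ Finset.univ.val.map Fg :=
      Multiset.mem_map_of_mem _ (Finset.mem_univ (v0 : V))
    rw [← hPkg] at hq0
    obtain ⟨v, _, heq2⟩ := Multiset.mem_map.1 hq0
    have hv0S : (v0 : V) ∈ S := v0.2
    have hFgv0 := hFg_mem (v0 : V) hv0S
    by_cases hv : v ∈ S
    · -- second coordinates give the result
      have := congrArg Prod.snd heq2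
      rw [hFk_mem v hv, hFgv0] at this
      exact this
    · -- first coordinates give a contradiction with hv0
      exfalso
      have h5 := congrArg Prod.fst heq2
      rw [hFk_not_mem v hv, hFgv0] at h5
      rw [hstep1] at h5
      have hd : DIso ((G.induce S).switchV ⟨(v0 : V), hv0S⟩) (G.induce S) :=
        Quotient.exact h5.symm
      apply hv0
      have : (⟨(v0 : V), hv0S⟩ : S) = v0 := rfl
      rwa [this] at hd
  -- conclude
  have hS' : DIso (K.induce S) (G.induce S) := Quotient.exact hstep1
  have hT' : DIso (K.induce T) (G.induce T) := Quotient.exact hstep2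
  exact diso_of_parts hdiff hcover hKU hGU hS' hT'
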